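/- The function V ↦ dim M_ℓ(V), from the Grassmannian of k-dimensional subspaces of L(ℝⁿ, ℝᵐ) to ℕ, is upper semicontinuous: if V_j → V in the Grassmannian and dim M_ℓ(V_j) = μ for all j, then dim M_ℓ(V) ≥ μ. -/

import Mathlib

set_option maxHeartbeats 1000000

open Filter Submodule Set RealInnerProductSpace


open Function

noncomputable section

variable {E F : Type*} [AddCommGroup E] [Module ℝ E] [AddCommGroup F] [Module ℝ F]

/-- `Mk k V` is the space of symmetric `k`-multilinear maps all of whose partial
contractions (fixing all slots but one) lie in `V`. -/
def Mk (k : ℕ) (V : Submodule ℝ (E →ₗ[ℝ] F)) :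
    Submodule ℝ (MultilinearMap ℝ (fun _ : Fin k => E) F) where
  carrier := {T | (∀ (σ : Equiv.Perm (Fin k)) (x : Fin k → E), T (x ∘ σ) = T x) ∧
    ∀ (x : Fin k → E) (i : Fin k), T.toLinearMap x i ∈ V}
  add_mem' := by
    rintro T S ⟨hT1, hT2⟩ ⟨hS1, hS2⟩
    refine ⟨fun σ x => by simp [hT1 σ x, hS1 σ x], fun x i => ?_⟩
    have h : (T + S).toLinearMap x i = T.toLinearMap x i + S.toLinearMap x i := by
      ext z; simp
    rw [h]; exact V.add_mem (hT2 x i) (hS2 x i)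
  zero_mem' := by
    refine ⟨fun σ x => rfl, fun x i => ?_⟩
    have h : (0 : MultilinearMap ℝ (fun _ : Fin k => E) F).toLinearMap x i = 0 := by
      ext z; simp
    rw [h]; exact V.zero_mem
  smul_mem' := by
    rintro c T ⟨hT1, hT2⟩
    refine ⟨fun σ x => by simp [hT1 σ x], fun x i => ?_⟩
    have h : (c • T).toLinearMap x i = c • T.toLinearMap x i := by
      ext z; simp
    rw [h]; exact V.smul_mem c (hT2 x i)

end

noncomputable section Helpers

variable {E F : Type*} [AddCommGroup E] [Module ℝ E] [AddCommGroup F] [Module ℝ F]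

lemma mem_Mk_iff {k : ℕ} {V : Submodule ℝ (E →ₗ[ℝ] F)}
    {T : MultilinearMap ℝ (fun _ : Fin k => E) F} :
    T ∈ Mk k V ↔ (∀ (σ : Equiv.Perm (Fin k)) (x : Fin k → E), T (x ∘ σ) = T x) ∧
      ∀ (x : Fin k → E) (i : Fin k), T.toLinearMap x i ∈ V := Iff.rfl

end Helpers

section MoreHelpers

lemma span_limit_mem {ι : Type*} [Fintype ι] {k : ℕ}
    (F : ℕ → Fin k → EuclideanSpace ℝ ι) (G : Fin k → EuclideanSpace ℝ ι)
    (hF : ∀ i, Tendsto (fun j => F j i) atTop (nhds (G i)))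
    (hG : LinearIndependent ℝ G)
    (w : ℕ → EuclideanSpace ℝ ι) (hw : ∀ j, w j ∈ span ℝ (range (F j)))
    {z : EuclideanSpace ℝ ι} (hz : Tendsto w atTop (nhds z)) :
    z ∈ span ℝ (range G) := by
  classical
  set M : Matrix (Fin k) (Fin k) ℝ := Matrix.of fun a b => ⟪G a, G b⟫ with hMdef
  set Mj : ℕ → Matrix (Fin k) (Fin k) ℝ := fun j => Matrix.of fun a b => ⟪F j a, F j b⟫ with hMjdef
  have hMtend : Tendsto Mj atTop (nhds M) :=
    tendsto_pi_nhds.2 fun a => tendsto_pi_nhds.2 fun b => (hF a).inner (hF b)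
  have hMdet : M.det ≠ 0 := by
    intro h0
    obtain ⟨v, hv0, hv⟩ := Matrix.exists_mulVec_eq_zero_iff.2 h0
    have hsum : (∑ b, v b • G b) = 0 := by
      have h2 : ⟪∑ a, v a • G a, ∑ b, v b • G b⟫ = 0 := by
        rw [sum_inner]
        have : ∀ a ∈ Finset.univ, ⟪v a • G a, ∑ b, v b • G b⟫ = v a * (M.mulVec v a) := by
          intro a _
          rw [real_inner_smul_left, inner_sum]
          congr 1
          simp only [Matrix.mulVec, dotProduct, real_inner_smul_right, hMdef,
            Matrix.of_apply, PiLp.inner_apply, RCLike.inner_apply, conj_trivial]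
          refine Finset.sum_congr rfl fun x _ => ?_
          rw [Finset.sum_mul]
          refine Finset.sum_congr rfl fun y _ => ?_
          simp only [PiLp.smul_apply, smul_eq_mul]
          ring
        rw [Finset.sum_congr rfl this, hv]
        simp
      exact inner_self_eq_zero.1 h2
    exact hv0 (funext fun b => Fintype.linearIndependent_iff.1 hG v hsum b)
  have hdet : Tendsto (fun j => (Mj j).det) atTop (nhds M.det) :=
    ((continuous_id.matrix_det).tendsto M).comp hMtend
  have hev : ∀ᶠ j in atTop, (Mj j).det ≠ 0 := hdet.eventually_ne hMdet
  set bv : ℕ → Fin k → ℝ := fun j a => ⟪F j a, w j⟫ with hbvdef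
  set c : ℕ → Fin k → ℝ := fun j => (Mj j)⁻¹.mulVec (bv j) with hcdef
  set cl : Fin k → ℝ := M⁻¹.mulVec (fun a => ⟪G a, z⟫) with hcldef
  have hinv : Tendsto (fun j => (Mj j)⁻¹) atTop (nhds M⁻¹) := by
    have hadj : Tendsto (fun j => (Mj j).adjugate) atTop (nhds M.adjugate) :=
      ((continuous_id.matrix_adjugate).tendsto M).comp hMtend
    have h3 : Tendsto (fun j => ((Mj j).det)⁻¹ • (Mj j).adjugate) atTop
        (nhds ((M.det)⁻¹ • M.adjugate)) := (hdet.inv₀ hMdet).smul hadj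
    simpa [Matrix.inv_def, Ring.inverse_eq_inv'] using h3
  have hc : Tendsto c atTop (nhds cl) := by
    refine tendsto_pi_nhds.2 fun a => ?_
    have : ∀ j, c j a = ∑ b, ((Mj j)⁻¹ a b) * bv j b := fun j => rfl
    simp only [this]
    have hclz : cl a = ∑ b, (M⁻¹ a b) * ⟪G b, z⟫ := rfl
    rw [hclz]
    refine tendsto_finset_sum _ fun b _ => ?_
    exact (tendsto_pi_nhds.1 (tendsto_pi_nhds.1 hinv a) b).mul ((hF b).inner hz)
  have hrepr : ∀ᶠ j in atTop, w j = ∑ b, c j b • F j b := by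
    filter_upwards [hev] with j hj
    obtain ⟨d, hd⟩ := (mem_span_range_iff_exists_fun ℝ).1 (hw j)
    have hMd : (Mj j).mulVec d = bv j := by
      funext a
      show ∑ b, (Mj j a b) * d b = ⟪F j a, w j⟫
      rw [← hd, inner_sum]
      exact Finset.sum_congr rfl fun b _ => by
        simp only [hMjdef, Matrix.of_apply, real_inner_smul_right, PiLp.inner_apply,
          RCLike.inner_apply, conj_trivial]
        rw [Finset.sum_mul]
        refine Finset.sum_congr rfl fun y _ => ?_
        simp only [PiLp.smul_apply, smul_eq_mul]
        ring
    have hcd : c j = d := by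
      have h4 : (Mj j)⁻¹.mulVec ((Mj j).mulVec d) = d := by
        rw [Matrix.mulVec_mulVec, Matrix.nonsing_inv_mul _ (isUnit_iff_ne_zero.2 hj),
          Matrix.one_mulVec]
      rw [hcdef]
      simp only [hMd] at h4 ⊢
      exact h4
    rw [hcd, hd]
  have hsum : Tendsto (fun j => ∑ b, c j b • F j b) atTop (nhds (∑ b, cl b • G b)) :=
    tendsto_finset_sum _ fun b _ => (tendsto_pi_nhds.1 hc b).smul (hF b)
  have hzeq : z = ∑ b, cl b • G b :=
    tendsto_nhds_unique (hz.congr' hrepr) hsum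
  rw [hzeq]
  exact sum_mem fun b _ => smul_mem _ _ (subset_span (mem_range_self b))

lemma euclid_tendsto_of_coords {ι : Type*} [Fintype ι] {u : ℕ → EuclideanSpace ℝ ι}
    {x : EuclideanSpace ℝ ι} (h : ∀ p, Tendsto (fun j => u j p) atTop (nhds (x p))) :
    Tendsto u atTop (nhds x) := by
  have h1 : Tendsto (fun j => (WithLp.equiv 2 (ι → ℝ)) (u j)) atTop
      (nhds ((WithLp.equiv 2 (ι → ℝ)) x)) := tendsto_pi_nhds.2 h
  have h2 := ((PiLp.continuous_toLp 2 (fun _ : ι => ℝ)).tendsto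
    ((WithLp.equiv 2 (ι → ℝ)) x)).comp h1
  exact h2

noncomputable def evL {n m : ℕ} : ((Fin n → ℝ) →ₗ[ℝ] (Fin m → ℝ)) →ₗ[ℝ]
    EuclideanSpace ℝ (Fin m × Fin n) where
  toFun φ := WithLp.toLp 2 (fun p : Fin m × Fin n => φ (Pi.single p.2 1) p.1)
  map_add' φ ψ := by ext p; simp
  map_smul' r φ := by ext p; simp

lemma evL_inj {n m : ℕ} : Function.Injective (evL (n := n) (m := m)) := by
  intro φ ψ h
  apply LinearMap.pi_ext
  intro i x
  have h1 : ∀ a, φ (Pi.single i 1) a = ψ (Pi.single i 1) a := by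
    intro a
    have := congrArg (fun v : EuclideanSpace ℝ (Fin m × Fin n) => v (a, i)) h
    simpa [evL] using this
  have h2 : φ (Pi.single i 1) = ψ (Pi.single i 1) := funext h1
  have hx : (Pi.single i x : Fin n → ℝ) = x • (Pi.single i 1 : Fin n → ℝ) := by
    rw [← Pi.single_smul, smul_eq_mul, mul_one]
  rw [hx, map_smul, map_smul, h2]

end MoreHelpers


/-- Upper semicontinuity of `V ↦ dim M_ℓ(V)` on the Grassmannian of `k`-dimensional
subspaces of `L(ℝⁿ,ℝᵐ)`: if `V_j → V` (convergence of spanning frames) and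
`dim M_ℓ(V_j) = μ` for all `j`, then `dim M_ℓ(V) ≥ μ`. -/
theorem dim_Mk_upper_semicontinuous {n m k ℓ μ : ℕ}
    (f : ℕ → Fin k → ((Fin n → ℝ) →ₗ[ℝ] (Fin m → ℝ)))
    (g : Fin k → ((Fin n → ℝ) →ₗ[ℝ] (Fin m → ℝ)))
    (hconv : ∀ (i : Fin k) (v : Fin n → ℝ),
      Filter.Tendsto (fun j => f j i v) Filter.atTop (nhds (g i v)))
    (hframe : ∀ j, Module.finrank ℝ (Submodule.span ℝ (Set.range (f j))) = k)
    (hframeV : Module.finrank ℝ (Submodule.span ℝ (Set.range g)) = k)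
    (hμ : ∀ j, Module.finrank ℝ (Mk ℓ (Submodule.span ℝ (Set.range (f j)))) = μ) :
    μ ≤ Module.finrank ℝ (Mk ℓ (Submodule.span ℝ (Set.range g))) := by
  classical
  have hgind : LinearIndependent ℝ g := by
    rw [linearIndependent_iff_card_eq_finrank_span]
    simpa [Set.finrank] using hframeV.symm
  set D := Module.finrank ℝ (MultilinearMap ℝ (fun _ : Fin ℓ => (Fin n → ℝ)) (Fin m → ℝ)) with hD
  let eW : MultilinearMap ℝ (fun _ : Fin ℓ => (Fin n → ℝ)) (Fin m → ℝ) ≃ₗ[ℝ]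
      EuclideanSpace ℝ (Fin D) :=
    (Module.finBasis ℝ _).equivFun.trans (WithLp.linearEquiv 2 ℝ (Fin D → ℝ)).symm
  let U : ℕ → Submodule ℝ (EuclideanSpace ℝ (Fin D)) := fun j =>
    (Mk ℓ (Submodule.span ℝ (Set.range (f j)))).map (eW : _ →ₗ[ℝ] _)
  have hU : ∀ j, Module.finrank ℝ (U j) = μ := fun j => by
    rw [LinearEquiv.finrank_map_eq]; exact hμ j
  let B : ∀ j, OrthonormalBasis (Fin μ) ℝ (U j) := fun j =>
    (stdOrthonormalBasis ℝ (U j)).reindex (finCongr (hU j))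
  let s : ℕ → Fin μ → EuclideanSpace ℝ (Fin D) := fun j a => (B j a : EuclideanSpace ℝ (Fin D))
  have hs_on : ∀ j, Orthonormal ℝ (s j) := by
    intro j
    rw [orthonormal_iff_ite]
    intro a b
    have h := orthonormal_iff_ite.1 (B j).orthonormal a b
    rwa [Submodule.coe_inner] at h
  have hsmem : ∀ j a, eW.symm (s j a) ∈ Mk ℓ (Submodule.span ℝ (Set.range (f j))) := by
    intro j a
    obtain ⟨T, hT, hTe⟩ := (B j a).2
    rw [show s j a = (B j a : EuclideanSpace ℝ (Fin D)) from rfl, ← hTe]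
    simpa using hT
  have hK : IsCompact (Set.univ.pi fun _ : Fin μ =>
      Metric.closedBall (0 : EuclideanSpace ℝ (Fin D)) 1) :=
    isCompact_univ_pi fun _ => isCompact_closedBall _ _
  obtain ⟨t, -, φ, hφ, htend⟩ := hK.tendsto_subseq (x := s) (fun j => by
    intro a _
    simpa [mem_closedBall_zero_iff] using le_of_eq ((hs_on j).1 a))
  have hta : ∀ a, Tendsto (fun j => s (φ j) a) atTop (nhds (t a)) := fun a =>
    tendsto_pi_nhds.1 htend a
  have hton : Orthonormal ℝ t := by
    rw [orthonormal_iff_ite]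
    intro a b
    have h2 : Tendsto (fun j => ⟪s (φ j) a, s (φ j) b⟫) atTop
        (nhds (if a = b then (1:ℝ) else 0)) :=
      Tendsto.congr (fun j => (orthonormal_iff_ite.1 (hs_on (φ j)) a b).symm) tendsto_const_nhds
    exact tendsto_nhds_unique ((hta a).inner (hta b)) h2
  have hmem : ∀ a, eW.symm (t a) ∈ Mk ℓ (Submodule.span ℝ (Set.range g)) := by
    intro a
    rw [mem_Mk_iff]
    constructor
    · intro σ x
      let ex : (Fin ℓ → (Fin n → ℝ)) → (EuclideanSpace ℝ (Fin D) →ₗ[ℝ] (Fin m → ℝ)) := fun y =>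
        { toFun := fun u => eW.symm u y
          map_add' := by intro u v; simp
          map_smul' := by intro r u; simp }
      have hcont : ∀ y, Continuous (ex y) := fun y => (ex y).continuous_of_finiteDimensional
      have h1 : Tendsto (fun j => ex (x ∘ σ) (s (φ j) a)) atTop (nhds (ex (x ∘ σ) (t a))) :=
        ((hcont _).tendsto _).comp (hta a)
      have h2 : Tendsto (fun j => ex x (s (φ j) a)) atTop (nhds (ex x (t a))) :=
        ((hcont _).tendsto _).comp (hta a)
      have heq : ∀ j, ex (x ∘ σ) (s (φ j) a) = ex x (s (φ j) a) := fun j =>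
        (mem_Mk_iff.1 (hsmem (φ j) a)).1 σ x
      exact tendsto_nhds_unique (h1.congr heq) h2
    · intro x i
      let ctr : EuclideanSpace ℝ (Fin D) →ₗ[ℝ] ((Fin n → ℝ) →ₗ[ℝ] (Fin m → ℝ)) :=
        { toFun := fun u => (eW.symm u).toLinearMap x i
          map_add' := by intro u v; ext z; simp
          map_smul' := by intro r u; ext z; simp }
      let ψ : EuclideanSpace ℝ (Fin D) →ₗ[ℝ] EuclideanSpace ℝ (Fin m × Fin n) := evL.comp ctr
      have hψc : Continuous ψ := ψ.continuous_of_finiteDimensional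
      have hFev : ∀ i', Tendsto (fun j => evL (f (φ j) i')) atTop (nhds (evL (g i'))) := by
        intro i'
        have base : Tendsto (fun j => evL (f j i')) atTop (nhds (evL (g i'))) := by
          apply euclid_tendsto_of_coords
          intro p
          exact tendsto_pi_nhds.1 (hconv i' (Pi.single p.2 1)) p.1
        exact base.comp hφ.tendsto_atTop
      have hGind : LinearIndependent ℝ (⇑evL ∘ g) :=
        hgind.map' evL (LinearMap.ker_eq_bot.2 evL_inj)
      have hwmem : ∀ j, ψ (s (φ j) a) ∈ span ℝ (range (⇑evL ∘ f (φ j))) := by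
        intro j
        have h3 : ctr (s (φ j) a) ∈ span ℝ (range (f (φ j))) :=
          (mem_Mk_iff.1 (hsmem (φ j) a)).2 x i
        rw [Set.range_comp, ← Submodule.map_span]
        exact Submodule.mem_map_of_mem h3
      have key := span_limit_mem (fun j => ⇑evL ∘ f (φ j)) (⇑evL ∘ g) hFev hGind
        (fun j => ψ (s (φ j) a)) hwmem ((hψc.tendsto _).comp (hta a))
      rw [Set.range_comp, ← Submodule.map_span] at key
      obtain ⟨y, hy, hey⟩ := key
      have hyc : y = ctr (t a) := evL_inj hey
      rw [hyc] at hy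
      exact hy
  have hti : LinearIndependent ℝ t := hton.linearIndependent
  have hlin := hti.map' (eW.symm.toLinearMap) (LinearMap.ker_eq_bot.2 eW.symm.injective)
  have hspan : Submodule.span ℝ (Set.range (⇑eW.symm.toLinearMap ∘ t)) ≤
      Mk ℓ (Submodule.span ℝ (Set.range g)) := by
    rw [Submodule.span_le]
    rintro - ⟨a, rfl⟩
    exact hmem a
  have hcard := finrank_span_eq_card hlin
  haveI : FiniteDimensional ℝ (MultilinearMap ℝ (fun _ : Fin ℓ => (Fin n → ℝ)) (Fin m → ℝ)) :=
    inferInstance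
  calc μ = Module.finrank ℝ (Submodule.span ℝ (Set.range (⇑eW.symm.toLinearMap ∘ t))) := by
        rw [hcard]; simp
    _ ≤ Module.finrank ℝ (Mk ℓ (Submodule.span ℝ (Set.range g))) := Submodule.finrank_mono hspan
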